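/- Fix L ≥ 2 and let E = ZMod L × ZMod L × Fin 2 index the edges of the L×L torus grid, where (a,b,0) is the horizontal edge joining vertex (a,b) to (a+1,b) and (a,b,1) is the vertical edge joining (a,b) to (a,b+1); the star of vertex (a,b) is {(a,b,0), (a−1,b,0), (a,b,1), (a,b−1,1)} and the boundary of plaquette (a,b) is {(a,b,0), (a,b+1,0), (a,b,1), (a+1,b,1)}. Let H be a complex inner product space and A : E → Fin 2 → (H →ₗ[ℂ] H) with each A e x self-adjoint, (A e x) ∘ (A e x) = id, and A e x commuting with A e' y whenever e ≠ e'. Fix j = (0,0,0) and define X'_e = A e 0 and Z'_e = A e 1 for e ≠ j, X'_j = (A j 0 + A j 1)/√2, Z'_j = (A j 0 − A j 1)/√2; for each vertex w set S'_v(w) = ∏_{e ∈ star(w)} X'_e and for each plaquette f set S'_p(f) = ∏_{e ∈ boundary(f)} Z'_e (the factors commute, so the products are well-defined), and let B = ∑_w S'_v(w) + ∑_f S'_p(f). Then the operator identity (2L²) • id − B = (1/2) ∑_w (id − S'_v(w))² + (1/2) ∑_f (id − S'_p(f))² holds, and consequently re⟪φ, B φ⟫ ≤ 2L² · ‖φ‖²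 for every φ ∈ H; i.e. the maximal quantum value of the toric-code Bell expression I_N^tor is β_q^tor(N) = N = 2L². -/
import Mathlib


noncomputable section

open scoped InnerProductSpace

namespace ToricBell

variable {H : Type*} [NormedAddCommGroup H] [InnerProductSpace ℂ H] {L : ℕ}

/-- The edges of the `L × L` torus grid: `(a, b, 0)` is the horizontal edge joining `(a, b)`
to `(a+1, b)` and `(a, b, 1)` is the vertical edge joining `(a, b)` to `(a, b+1)`. -/
abbrev Edge (L : ℕ) : Type := ZMod L × ZMod L × Fin 2

/-- The reference edge `j = (0, 0, 0)`. -/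
def j0 (L : ℕ) : Edge L := (0, 0, 0)

/-- The effective `X` observable at each edge (the reference edge plays the special role). -/
def Xe (A : Edge L → Fin 2 → Module.End ℂ H) (e : Edge L) : Module.End ℂ H :=
  if e = j0 L then (Real.sqrt 2 : ℂ)⁻¹ • (A (j0 L) 0 + A (j0 L) 1) else A e 0

/-- The effective `Z` observable at each edge (the reference edge plays the special role). -/
def Ze (A : Edge L → Fin 2 → Module.End ℂ H) (e : Edge L) : Module.End ℂ H :=
  if e = j0 L then (Real.sqrt 2 : ℂ)⁻¹ • (A (j0 L) 0 - A (j0 L) 1) else A e 1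

/-- The (effective) vertex operator `S'_v(a,b)`: the product of the effective `X` observables
over the star `{(a,b,0), (a−1,b,0), (a,b,1), (a,b−1,1)}` of the vertex `(a,b)`. -/
def Sv (A : Edge L → Fin 2 → Module.End ℂ H) (w : ZMod L × ZMod L) : Module.End ℂ H :=
  Xe A (w.1, w.2, 0) * Xe A (w.1 - 1, w.2, 0) * Xe A (w.1, w.2, 1) * Xe A (w.1, w.2 - 1, 1)

/-- The (effective) plaquette operator `S'_p(a,b)`: the product of the effective `Z` observables
over the boundary `{(a,b,0), (a,b+1,0), (a,b,1), (a+1,b,1)}` of the plaquette `(a,b)`. -/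
def Sp (A : Edge L → Fin 2 → Module.End ℂ H) (w : ZMod L × ZMod L) : Module.End ℂ H :=
  Ze A (w.1, w.2, 0) * Ze A (w.1, w.2 + 1, 0) * Ze A (w.1, w.2, 1) * Ze A (w.1 + 1, w.2, 1)

/-- The toric-code Bell operator `B = ∑_w S'_v(w) + ∑_f S'_p(f)`. -/
def Bell [NeZero L] (A : Edge L → Fin 2 → Module.End ℂ H) : Module.End ℂ H :=
  (∑ w : ZMod L × ZMod L, Sv A w) + ∑ w : ZMod L × ZMod L, Sp A w

/-! ### Auxiliary lemmas -/

/-- The cross term `A_j^0 A_j^1 + A_j^1 A_j^0`. -/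
def Ct (A : Edge L → Fin 2 → Module.End ℂ H) : Module.End ℂ H :=
  A (j0 L) 0 * A (j0 L) 1 + A (j0 L) 1 * A (j0 L) 0

lemma key_sqrt : ((Real.sqrt 2 : ℂ)⁻¹) ^ 2 = (2 : ℂ)⁻¹ := by
  rw [inv_pow]
  norm_cast
  rw [Real.sq_sqrt] <;> norm_num

/-- "Formally self-adjoint". -/
def IsSA (T : Module.End ℂ H) : Prop := ∀ u v : H, ⟪T u, v⟫_ℂ = ⟪u, T v⟫_ℂ

lemma IsSA.mul {a b : Module.End ℂ H} (ha : IsSA a) (hb : IsSA b) (hc : Commute a b) :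
    IsSA (a * b) := by
  intro u v
  have h1 : ⟪(a * b) u, v⟫_ℂ = ⟪a (b u), v⟫_ℂ := rfl
  have h2 : ⟪u, (b * a) v⟫_ℂ = ⟪u, b (a v)⟫_ℂ := rfl
  rw [h1, ha, hb, ← h2, hc]

lemma IsSA.one_sub {a : Module.End ℂ H} (ha : IsSA a) : IsSA (1 - a) := by
  intro u v
  simp only [LinearMap.sub_apply, Module.End.one_apply, inner_sub_left, inner_sub_right]
  rw [ha]

lemma conj_invsqrt : (starRingEnd ℂ) ((Real.sqrt 2 : ℂ)⁻¹) = (Real.sqrt 2 : ℂ)⁻¹ := by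
  rw [map_inv₀, Complex.conj_ofReal]

section WithA
variable (A : Edge L → Fin 2 → Module.End ℂ H)

lemma sa_Xe (hsa : ∀ e x (u v : H), ⟪A e x u, v⟫_ℂ = ⟪u, A e x v⟫_ℂ) (e : Edge L) :
    IsSA (Xe A e) := by
  unfold Xe
  split_ifs with he
  · intro u v
    simp only [LinearMap.smul_apply, LinearMap.add_apply, inner_smul_left, inner_smul_right,
      inner_add_left, inner_add_right, hsa, conj_invsqrt]
  · exact hsa e 0

lemma sa_Ze (hsa : ∀ e x (u v : H), ⟪A e x u, v⟫_ℂ = ⟪u, A e x v⟫_ℂ) (e : Edge L) :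
    IsSA (Ze A e) := by
  unfold Ze
  split_ifs with he
  · intro u v
    simp only [LinearMap.smul_apply, LinearMap.sub_apply, inner_smul_left, inner_smul_right,
      inner_sub_left, inner_sub_right, hsa, conj_invsqrt]
  · exact hsa e 1

lemma commA (hcomm : ∀ e e' x y, e ≠ e' → A e x * A e' y = A e' y * A e x)
    {e e' : Edge L} (h : e ≠ e') (x y : Fin 2) : Commute (A e x) (A e' y) :=
  hcomm e e' x y h

lemma Xe_comm_Xe (hcomm : ∀ e e' x y, e ≠ e' → A e x * A e' y = A e' y * A e x) {e e' : Edge L} (h : e ≠ e') : Commute (Xe A e) (Xe A e') := by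
  unfold Xe
  split_ifs with he he' he'
  · exact absurd (he.trans he'.symm) h
  · subst he
    exact ((commA A hcomm h 0 0).add_left (commA A hcomm h 1 0)).smul_left _
  · subst he'
    exact ((commA A hcomm h 0 0).add_right (commA A hcomm h 0 1)).smul_right _
  · exact commA A hcomm h 0 0

lemma Ze_comm_Ze (hcomm : ∀ e e' x y, e ≠ e' → A e x * A e' y = A e' y * A e x) {e e' : Edge L} (h : e ≠ e') : Commute (Ze A e) (Ze A e') := by
  unfold Ze
  split_ifs with he he' he'
  · exact absurd (he.trans he'.symm) h
  · subst he
    exact ((commA A hcomm h 0 1).sub_left (commA A hcomm h 1 1)).smul_left _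
  · subst he'
    exact ((commA A hcomm h 1 0).sub_right (commA A hcomm h 1 1)).smul_right _
  · exact commA A hcomm h 1 1

lemma Xe_sq (hsq : ∀ e x, A e x * A e x = 1) (e : Edge L) :
    Xe A e ^ 2 = if e = j0 L then 1 + (2 : ℂ)⁻¹ • Ct A else 1 := by
  unfold Xe Ct
  split_ifs with he
  · rw [smul_pow, key_sqrt, sq, add_mul, mul_add, mul_add, hsq _ 0, hsq _ 1]
    module
  · rw [sq, hsq e 0]

lemma Ze_sq (hsq : ∀ e x, A e x * A e x = 1) (e : Edge L) :
    Ze A e ^ 2 = if e = j0 L then 1 - (2 : ℂ)⁻¹ • Ct A else 1 := by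
  unfold Ze Ct
  split_ifs with he
  · rw [smul_pow, key_sqrt, sq, sub_mul, mul_sub, mul_sub, hsq _ 0, hsq _ 1]
    module
  · rw [sq, hsq e 1]

end WithA

section Distinct
variable [Fact (1 < L)]

lemma ne_vert_horiz (a b a' b' : ZMod L) : ((a, b, 0) : Edge L) ≠ (a', b', 1) := by
  intro h
  have h2 : (0 : Fin 2) = 1 := congrArg (fun e : Edge L => e.2.2) h
  exact absurd h2 (by decide)

lemma ne_j0_vert (a b : ZMod L) : ((a, b, 1) : Edge L) ≠ j0 L := by
  intro h
  have h2 : (1 : Fin 2) = 0 := congrArg (fun e : Edge L => e.2.2) h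
  exact absurd h2 (by decide)

lemma d12 (w : ZMod L × ZMod L) : ((w.1, w.2, 0) : Edge L) ≠ (w.1 - 1, w.2, 0) := by
  intro h
  have h1 := congrArg (fun e : Edge L => e.1) h
  exact one_ne_zero (sub_eq_self.mp (h1.symm : w.1 - 1 = w.1))

lemma d34 (w : ZMod L × ZMod L) : ((w.1, w.2, 1) : Edge L) ≠ (w.1, w.2 - 1, 1) := by
  intro h
  have h1 := congrArg (fun e : Edge L => e.2.1) h
  exact one_ne_zero (sub_eq_self.mp (h1.symm : w.2 - 1 = w.2))

lemma p12 (w : ZMod L × ZMod L) : ((w.1, w.2, 0) : Edge L) ≠ (w.1, w.2 + 1, 0) := by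
  intro h
  have h1 := congrArg (fun e : Edge L => e.2.1) h
  exact one_ne_zero (left_eq_add.mp (h1 : w.2 = w.2 + 1))

lemma p34 (w : ZMod L × ZMod L) : ((w.1, w.2, 1) : Edge L) ≠ (w.1 + 1, w.2, 1) := by
  intro h
  have h1 := congrArg (fun e : Edge L => e.1) h
  exact one_ne_zero (left_eq_add.mp (h1 : w.1 = w.1 + 1))

end Distinct

section Main
variable [Fact (1 < L)] (A : Edge L → Fin 2 → Module.End ℂ H)
variable (hcomm : ∀ e e' x y, e ≠ e' → A e x * A e' y = A e' y * A e x)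
variable (hsq : ∀ e x, A e x * A e x = 1)
variable (w : ZMod L × ZMod L)
include hcomm

lemma sv_c12 : Commute (Xe A (w.1, w.2, 0)) (Xe A (w.1 - 1, w.2, 0)) :=
  Xe_comm_Xe A hcomm (d12 w)
lemma sv_c13 : Commute (Xe A (w.1, w.2, 0)) (Xe A (w.1, w.2, 1)) :=
  Xe_comm_Xe A hcomm (ne_vert_horiz _ _ _ _)
lemma sv_c14 : Commute (Xe A (w.1, w.2, 0)) (Xe A (w.1, w.2 - 1, 1)) :=
  Xe_comm_Xe A hcomm (ne_vert_horiz _ _ _ _)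
lemma sv_c23 : Commute (Xe A (w.1 - 1, w.2, 0)) (Xe A (w.1, w.2, 1)) :=
  Xe_comm_Xe A hcomm (ne_vert_horiz _ _ _ _)
lemma sv_c24 : Commute (Xe A (w.1 - 1, w.2, 0)) (Xe A (w.1, w.2 - 1, 1)) :=
  Xe_comm_Xe A hcomm (ne_vert_horiz _ _ _ _)
lemma sv_c34 : Commute (Xe A (w.1, w.2, 1)) (Xe A (w.1, w.2 - 1, 1)) :=
  Xe_comm_Xe A hcomm (d34 w)

lemma sp_c12 : Commute (Ze A (w.1, w.2, 0)) (Ze A (w.1, w.2 + 1, 0)) :=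
  Ze_comm_Ze A hcomm (p12 w)
lemma sp_c13 : Commute (Ze A (w.1, w.2, 0)) (Ze A (w.1, w.2, 1)) :=
  Ze_comm_Ze A hcomm (ne_vert_horiz _ _ _ _)
lemma sp_c14 : Commute (Ze A (w.1, w.2, 0)) (Ze A (w.1 + 1, w.2, 1)) :=
  Ze_comm_Ze A hcomm (ne_vert_horiz _ _ _ _)
lemma sp_c23 : Commute (Ze A (w.1, w.2 + 1, 0)) (Ze A (w.1, w.2, 1)) :=
  Ze_comm_Ze A hcomm (ne_vert_horiz _ _ _ _)
lemma sp_c24 : Commute (Ze A (w.1, w.2 + 1, 0)) (Ze A (w.1 + 1, w.2, 1)) :=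
  Ze_comm_Ze A hcomm (ne_vert_horiz _ _ _ _)
lemma sp_c34 : Commute (Ze A (w.1, w.2, 1)) (Ze A (w.1 + 1, w.2, 1)) :=
  Ze_comm_Ze A hcomm (p34 w)

lemma sa_Sv (hsa : ∀ e x (u v : H), ⟪A e x u, v⟫_ℂ = ⟪u, A e x v⟫_ℂ) :
    IsSA (Sv A w) := by
  refine (((((sa_Xe A hsa _).mul (sa_Xe A hsa _) (sv_c12 A hcomm w)).mul (sa_Xe A hsa _)
    ?_).mul (sa_Xe A hsa _) ?_))
  · exact (sv_c13 A hcomm w).mul_left (sv_c23 A hcomm w)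
  · exact ((sv_c14 A hcomm w).mul_left (sv_c24 A hcomm w)).mul_left (sv_c34 A hcomm w)

lemma sa_Sp (hsa : ∀ e x (u v : H), ⟪A e x u, v⟫_ℂ = ⟪u, A e x v⟫_ℂ) :
    IsSA (Sp A w) := by
  refine (((((sa_Ze A hsa _).mul (sa_Ze A hsa _) (sp_c12 A hcomm w)).mul (sa_Ze A hsa _)
    ?_).mul (sa_Ze A hsa _) ?_))
  · exact (sp_c13 A hcomm w).mul_left (sp_c23 A hcomm w)
  · exact ((sp_c14 A hcomm w).mul_left (sp_c24 A hcomm w)).mul_left (sp_c34 A hcomm w)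

include hsq in
lemma Sv_sq :
    Sv A w ^ 2 = 1 + (if w = ((0, 0) : ZMod L × ZMod L) ∨ w = ((1, 0) : ZMod L × ZMod L)
      then (2 : ℂ)⁻¹ • Ct A else 0) := by
  have hprod : Sv A w ^ 2 = Xe A (w.1, w.2, 0) ^ 2 * Xe A (w.1 - 1, w.2, 0) ^ 2 *
      Xe A (w.1, w.2, 1) ^ 2 * Xe A (w.1, w.2 - 1, 1) ^ 2 := by
    rw [Sv, (((sv_c14 A hcomm w).mul_left (sv_c24 A hcomm w)).mul_left
      (sv_c34 A hcomm w)).mul_pow,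
      ((sv_c13 A hcomm w).mul_left (sv_c23 A hcomm w)).mul_pow,
      (sv_c12 A hcomm w).mul_pow]
  rw [hprod, Xe_sq A hsq, Xe_sq A hsq, Xe_sq A hsq, Xe_sq A hsq,
    if_neg (ne_j0_vert w.1 w.2), if_neg (ne_j0_vert w.1 (w.2 - 1))]
  by_cases hw1 : w = ((0, 0) : ZMod L × ZMod L)
  · subst hw1
    rw [if_pos (by simp [j0]), if_neg (by simp [j0, Prod.ext_iff, zero_sub, neg_eq_zero]),
      if_pos (Or.inl rfl)]
    simp only [mul_one, one_mul]
  · by_cases hw2 : w = ((1, 0) : ZMod L × ZMod L)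
    · subst hw2
      rw [if_neg (by simp [j0, Prod.ext_iff]), if_pos (by simp [j0, sub_self]),
        if_pos (Or.inr rfl)]
      simp only [mul_one, one_mul]
    · have hne1 : ((w.1, w.2, 0) : Edge L) ≠ j0 L := by
        intro h
        apply hw1
        have h1 := congrArg (fun e : Edge L => e.1) h
        have h2 := congrArg (fun e : Edge L => e.2.1) h
        exact Prod.ext_iff.mpr ⟨h1, h2⟩
      have hne2 : ((w.1 - 1, w.2, 0) : Edge L) ≠ j0 L := by
        intro h
        apply hw2
        have h1 := congrArg (fun e : Edge L => e.1) h
        have h2 := congrArg (fun e : Edge L => e.2.1) h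
        exact Prod.ext_iff.mpr ⟨sub_eq_zero.mp h1, h2⟩
      rw [if_neg hne1, if_neg hne2, if_neg (not_or.mpr ⟨hw1, hw2⟩)]
      simp only [mul_one, one_mul, add_zero]

include hsq in
lemma Sp_sq :
    Sp A w ^ 2 = 1 - (if w = ((0, 0) : ZMod L × ZMod L) ∨ w = ((0, -1) : ZMod L × ZMod L)
      then (2 : ℂ)⁻¹ • Ct A else 0) := by
  have hprod : Sp A w ^ 2 = Ze A (w.1, w.2, 0) ^ 2 * Ze A (w.1, w.2 + 1, 0) ^ 2 *
      Ze A (w.1, w.2, 1) ^ 2 * Ze A (w.1 + 1, w.2, 1) ^ 2 := by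
    rw [Sp, (((sp_c14 A hcomm w).mul_left (sp_c24 A hcomm w)).mul_left
      (sp_c34 A hcomm w)).mul_pow,
      ((sp_c13 A hcomm w).mul_left (sp_c23 A hcomm w)).mul_pow,
      (sp_c12 A hcomm w).mul_pow]
  rw [hprod, Ze_sq A hsq, Ze_sq A hsq, Ze_sq A hsq, Ze_sq A hsq,
    if_neg (ne_j0_vert w.1 w.2), if_neg (ne_j0_vert (w.1 + 1) w.2)]
  by_cases hw1 : w = ((0, 0) : ZMod L × ZMod L)
  · subst hw1
    rw [if_pos (by simp [j0]), if_neg (by simp [j0, Prod.ext_iff, zero_add]),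
      if_pos (Or.inl rfl)]
    simp only [mul_one, one_mul]
  · by_cases hw2 : w = ((0, -1) : ZMod L × ZMod L)
    · subst hw2
      rw [if_neg (by simp [j0, Prod.ext_iff, neg_eq_zero]),
        if_pos (by simp [j0, neg_add_cancel]), if_pos (Or.inr rfl)]
      simp only [mul_one, one_mul]
    · have hne1 : ((w.1, w.2, 0) : Edge L) ≠ j0 L := by
        intro h
        apply hw1
        have h1 := congrArg (fun e : Edge L => e.1) h
        have h2 := congrArg (fun e : Edge L => e.2.1) h
        exact Prod.ext_iff.mpr ⟨h1, h2⟩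
      have hne2 : ((w.1, w.2 + 1, 0) : Edge L) ≠ j0 L := by
        intro h
        apply hw2
        have h1 := congrArg (fun e : Edge L => e.1) h
        have h2 := congrArg (fun e : Edge L => e.2.1) h
        exact Prod.ext_iff.mpr ⟨h1, eq_neg_of_add_eq_zero_left h2⟩
      rw [if_neg hne1, if_neg hne2, if_neg (not_or.mpr ⟨hw1, hw2⟩)]
      simp only [mul_one, one_mul, sub_zero]

end Main

lemma sum_pair_ite [NeZero L] {a b : ZMod L × ZMod L} (hab : a ≠ b) (c : Module.End ℂ H) :
    ∑ w : ZMod L × ZMod L, (if w = a ∨ w = b then c else 0) = c + c := by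
  have h : ∀ w : ZMod L × ZMod L,
      (if w = a ∨ w = b then c else 0) = (if w ∈ ({a, b} : Finset _) then c else 0) := by
    intro w
    simp [Finset.mem_insert, Finset.mem_singleton]
  simp_rw [h]
  rw [Finset.sum_ite_mem, Finset.univ_inter, Finset.sum_pair hab]

/-- for self-adjoint dichotomic observables commuting across different edges of
the `L × L` torus (`L ≥ 2`), the toric-code Bell operator admits the sum-of-squares
decomposition `2L² • id − B = ½ ∑_w (id − S'_v(w))² + ½ ∑_f (id − S'_p(f))²`, and consequently
`re⟪φ, B φ⟫ ≤ 2L² ‖φ‖²` for every `φ`: the maximal quantum value of `I_N^tor` is `N = 2L²`. -/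
theorem toric_sos_and_quantum_bound [NeZero L] (hL : 2 ≤ L)
    (A : Edge L → Fin 2 → Module.End ℂ H)
    (hsa : ∀ e x (u v : H), ⟪A e x u, v⟫_ℂ = ⟪u, A e x v⟫_ℂ)
    (hsq : ∀ e x, A e x * A e x = 1)
    (hcomm : ∀ e e' x y, e ≠ e' → A e x * A e' y = A e' y * A e x) :
    (((2 * L ^ 2 : ℕ) : ℂ) • (1 : Module.End ℂ H) - Bell A =
      (2 : ℂ)⁻¹ • (∑ w : ZMod L × ZMod L, (1 - Sv A w) ^ 2) +
        (2 : ℂ)⁻¹ • ∑ w : ZMod L × ZMod L, (1 - Sp A w) ^ 2) ∧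
    ∀ φ : H, (⟪φ, Bell A φ⟫_ℂ).re ≤ 2 * (L : ℝ) ^ 2 * ‖φ‖ ^ 2 := by
  haveI : Fact (1 < L) := ⟨hL⟩
  have hcard : Fintype.card (ZMod L × ZMod L) = L ^ 2 := by
    simp [ZMod.card, sq]
  have hsum1 : ∑ _w : ZMod L × ZMod L, (1 : Module.End ℂ H) = ((L ^ 2 : ℕ) : ℂ) • 1 := by
    rw [Finset.sum_const, Finset.card_univ, hcard, ← Nat.cast_smul_eq_nsmul ℂ]
  have hV2 : ∑ w : ZMod L × ZMod L, Sv A w ^ 2 = ((L ^ 2 : ℕ) : ℂ) • 1 + Ct A := by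
    have hab : ((0, 0) : ZMod L × ZMod L) ≠ (1, 0) := by
      intro h
      exact one_ne_zero ((congrArg Prod.fst h).symm : (1 : ZMod L) = 0)
    rw [Finset.sum_congr rfl fun w _ => Sv_sq A hcomm hsq w, Finset.sum_add_distrib, hsum1,
      sum_pair_ite hab]
    module
  have hP2 : ∑ w : ZMod L × ZMod L, Sp A w ^ 2 = ((L ^ 2 : ℕ) : ℂ) • 1 - Ct A := by
    have hab : ((0, 0) : ZMod L × ZMod L) ≠ (0, -1) := by
      intro h
      have h2 : (0 : ZMod L) = -1 := congrArg Prod.snd h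
      exact one_ne_zero (neg_eq_zero.mp h2.symm)
    rw [Finset.sum_congr rfl fun w _ => Sp_sq A hcomm hsq w, Finset.sum_sub_distrib, hsum1,
      sum_pair_ite hab]
    module
  have expand : ∀ S : Module.End ℂ H, (1 - S) ^ 2 = 1 - (S + S) + S ^ 2 := fun S => by
    noncomm_ring
  have eV : ∑ w : ZMod L × ZMod L, (1 - Sv A w) ^ 2
      = ((L ^ 2 : ℕ) : ℂ) • 1 - ((∑ w : ZMod L × ZMod L, Sv A w) + ∑ w : ZMod L × ZMod L, Sv A w)
        + (((L ^ 2 : ℕ) : ℂ) • 1 + Ct A) := by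
    simp_rw [expand]
    rw [Finset.sum_add_distrib, Finset.sum_sub_distrib, Finset.sum_add_distrib, hsum1, hV2]
  have eP : ∑ w : ZMod L × ZMod L, (1 - Sp A w) ^ 2
      = ((L ^ 2 : ℕ) : ℂ) • 1 - ((∑ w : ZMod L × ZMod L, Sp A w) + ∑ w : ZMod L × ZMod L, Sp A w)
        + (((L ^ 2 : ℕ) : ℂ) • 1 - Ct A) := by
    simp_rw [expand]
    rw [Finset.sum_add_distrib, Finset.sum_sub_distrib, Finset.sum_add_distrib, hsum1, hP2]
  have hiden : ((2 * L ^ 2 : ℕ) : ℂ) • (1 : Module.End ℂ H) - Bell A =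
      (2 : ℂ)⁻¹ • (∑ w : ZMod L × ZMod L, (1 - Sv A w) ^ 2) +
        (2 : ℂ)⁻¹ • ∑ w : ZMod L × ZMod L, (1 - Sp A w) ^ 2 := by
    rw [Bell, eV, eP]
    push_cast
    module
  refine ⟨hiden, fun φ => ?_⟩
  have hL1 : (⟪φ, (((2 * L ^ 2 : ℕ) : ℂ) • (1 : Module.End ℂ H) - Bell A) φ⟫_ℂ).re
      = 2 * (L : ℝ) ^ 2 * ‖φ‖ ^ 2 - (⟪φ, Bell A φ⟫_ℂ).re := by
    have hre : (⟪φ, φ⟫_ℂ).re = ‖φ‖ ^ 2 := inner_self_eq_norm_sq (𝕜 := ℂ) φ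
    have him : (⟪φ, φ⟫_ℂ).im = 0 := inner_self_im (𝕜 := ℂ) φ
    rw [LinearMap.sub_apply, inner_sub_right, LinearMap.smul_apply, Module.End.one_apply,
      inner_smul_right, Complex.sub_re, Complex.mul_re, Complex.natCast_re, Complex.natCast_im,
      hre, him]
    push_cast
    ring
  have hterm : ∀ S : Module.End ℂ H, IsSA S →
      0 ≤ (⟪φ, ((1 - S) ^ 2 : Module.End ℂ H) φ⟫_ℂ).re := by
    intro S hS
    have h2 : ⟪φ, ((1 - S) ^ 2 : Module.End ℂ H) φ⟫_ℂ = ⟪(1 - S) φ, (1 - S) φ⟫_ℂ := by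
      rw [sq]
      exact (hS.one_sub φ ((1 - S) φ)).symm
    have h3 : (⟪(1 - S) φ, (1 - S) φ⟫_ℂ).re = ‖(1 - S) φ‖ ^ 2 :=
      inner_self_eq_norm_sq (𝕜 := ℂ) _
    rw [h2, h3]
    positivity
  have hkey : ∀ f : (ZMod L × ZMod L) → Module.End ℂ H, (∀ w, 0 ≤ (⟪φ, f w φ⟫_ℂ).re) →
      0 ≤ (⟪φ, ((2 : ℂ)⁻¹ • ∑ w : ZMod L × ZMod L, f w) φ⟫_ℂ).re := by
    intro f hf
    rw [LinearMap.smul_apply, inner_smul_right]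
    have h2 : (2 : ℂ)⁻¹ = ((2⁻¹ : ℝ) : ℂ) := by norm_num
    rw [h2, Complex.re_ofReal_mul, LinearMap.sum_apply, inner_sum, Complex.re_sum]
    exact mul_nonneg (by norm_num) (Finset.sum_nonneg fun w _ => hf w)
  have hR : 0 ≤ (⟪φ, (((2 : ℂ)⁻¹ • (∑ w : ZMod L × ZMod L, (1 - Sv A w) ^ 2) +
      (2 : ℂ)⁻¹ • ∑ w : ZMod L × ZMod L, (1 - Sp A w) ^ 2 : Module.End ℂ H)) φ⟫_ℂ).re := by
    rw [LinearMap.add_apply, inner_add_right, Complex.add_re]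
    exact add_nonneg (hkey _ fun w => hterm _ (sa_Sv A hcomm w hsa))
      (hkey _ fun w => hterm _ (sa_Sp A hcomm w hsa))
  rw [hiden] at hL1
  linarith [hL1, hR]


end ToricBell
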